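/- Let f : {-1,1}^n → {1,...,n}, let F_{ij} = E[Y_i · 1{f(Y)=j}] for Y uniform on {-1,1}^n, and let α_j = Pr[f(Y)=j]. Suppose Pr[f(Y) ∉ Ω] ≥ 0.009079 where Ω is a set of 8 indices j with the largest values of α_j (or all indices if n < 8). Then Σ_{i,j=1}^n F_{ij}² < 0.4962357. -/

import Mathlib

open Finset Real
open scoped Classical

/-- The real value of a coordinate: `true ↦ 1`, `false ↦ -1`, encoding `{-1,1}`. -/
noncomputable def chi (b : Bool) : ℝ := if b then 1 else -1

/-- Expectation with respect to the uniform measure on `{-1,1}^n`. -/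
noncomputable def Ex (n : ℕ) (φ : (Fin n → Bool) → ℝ) : ℝ :=
  (∑ x : Fin n → Bool, φ x) / 2 ^ n

/-- Probability with respect to the uniform measure on `{-1,1}^n`. -/
noncomputable def Pr (n : ℕ) (p : (Fin n → Bool) → Prop) : ℝ :=
  Ex n (fun x => if p x then 1 else 0)

/-- Expectation for two independent uniform vectors on `{-1,1}^n`. -/
noncomputable def Ex2 (n : ℕ) (φ : (Fin n → Bool) → (Fin n → Bool) → ℝ) : ℝ :=
  (∑ x : Fin n → Bool, ∑ y : Fin n → Bool, φ x y) / 2 ^ (2 * n)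

/-- Probability for two independent uniform vectors on `{-1,1}^n`. -/
noncomputable def Pr2 (n : ℕ) (p : (Fin n → Bool) → (Fin n → Bool) → Prop) : ℝ :=
  Ex2 n (fun x y => if p x y then 1 else 0)

/-- Fourier coefficient `ĥ(S) = E[h(X)·∏_{i∈S} X_i]`. -/
noncomputable def coeff (n : ℕ) (h : (Fin n → Bool) → ℝ) (S : Finset (Fin n)) : ℝ :=
  Ex n (fun x => h x * ∏ i ∈ S, chi (x i))

/-- Pointwise negation `x ↦ -x` on `{-1,1}^n`. -/
def neg (n : ℕ) (x : Fin n → Bool) : Fin n → Bool := fun i => !(x i)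

namespace S15
variable {n : ℕ}

lemma chi_mul_self (b : Bool) : chi b * chi b = 1 := by cases b <;> norm_num [chi]
lemma chi_not (b : Bool) : chi (!b) = - chi b := by cases b <;> norm_num [chi]

/-- flip coordinate i -/
def flip (i : Fin n) (x : Fin n → Bool) : Fin n → Bool := Function.update x i (!x i)

lemma flip_invol (i : Fin n) : Function.Involutive (flip i) := by
  intro x
  funext k
  by_cases h : k = i
  · subst h; simp [flip]
  · simp [flip, Function.update_of_ne h]

lemma sum_eq_sum_flip (i : Fin n) (g : (Fin n → Bool) → ℝ) :
    ∑ x : Fin n → Bool, g x = ∑ x : Fin n → Bool, g (flip i x) :=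
  Fintype.sum_bijective (flip i) (flip_invol i).bijective _ _
    (fun x => by rw [flip_invol i x])

lemma flip_same (i : Fin n) (x : Fin n → Bool) : (flip i x) i = !(x i) := by simp [flip]
lemma flip_other {i k : Fin n} (h : k ≠ i) (x : Fin n → Bool) : (flip i x) k = x k := by
  simp [flip, Function.update_of_ne h]

lemma orth0 (i : Fin n) : ∑ x : Fin n → Bool, chi (x i) = 0 := by
  have h := sum_eq_sum_flip i (fun x => chi (x i))
  simp only [flip_same, chi_not] at h
  have : (2:ℝ) * ∑ x : Fin n → Bool, chi (x i) = 0 := by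
    rw [two_mul]; nth_rewrite 2 [h]; rw [← Finset.sum_add_distrib]; simp
  linarith

lemma orth (i k : Fin n) (hik : i ≠ k) : ∑ x : Fin n → Bool, chi (x i) * chi (x k) = 0 := by
  have h := sum_eq_sum_flip i (fun x => chi (x i) * chi (x k))
  simp only [flip_same, flip_other (Ne.symm hik), chi_not] at h
  have : (2:ℝ) * ∑ x : Fin n → Bool, chi (x i) * chi (x k) = 0 := by
    rw [two_mul]; nth_rewrite 2 [h]; rw [← Finset.sum_add_distrib]
    apply Finset.sum_eq_zero; intro x _; ring
  linarith

lemma card_cube : (Fintype.card (Fin n → Bool) : ℝ) = 2^n := by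
  simp [Fintype.card_fun]

lemma sum_one_cube : ∑ _x : Fin n → Bool, (1:ℝ) = 2^n := by
  rw [Finset.sum_const, Finset.card_univ, nsmul_eq_mul, mul_one, ← card_cube]


section Fourier
variable (A : Finset (Fin n → Bool))

/-- unnormalized level-1 coefficients -/
noncomputable def sig (i : Fin n) : ℝ := ∑ x ∈ A, chi (x i)

/-- the linear form -/
noncomputable def lin (x : Fin n → Bool) : ℝ := ∑ i, sig A i * chi (x i)

lemma sumA_lin : ∑ x ∈ A, lin A x = ∑ i, (sig A i)^2 := by
  unfold lin
  rw [Finset.sum_comm]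
  apply Finset.sum_congr rfl
  intro i _
  rw [← Finset.mul_sum]
  rw [show (∑ x ∈ A, chi (x i)) = sig A i from rfl, sq]

lemma sum_lin_sq : ∑ x : Fin n → Bool, (lin A x)^2 = 2^n * ∑ i, (sig A i)^2 := by
  unfold lin
  have expand : ∀ x : Fin n → Bool,
      (∑ i, sig A i * chi (x i))^2 = ∑ i, ∑ k, (sig A i * sig A k) * (chi (x i) * chi (x k)) := by
    intro x
    rw [sq, Finset.sum_mul_sum]
    apply Finset.sum_congr rfl; intro i _
    apply Finset.sum_congr rfl; intro k _
    ring
  simp only [expand]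
  rw [Finset.sum_comm]
  have : ∀ i : Fin n, ∑ x : Fin n → Bool, ∑ k, (sig A i * sig A k) * (chi (x i) * chi (x k))
      = 2^n * (sig A i)^2 := by
    intro i
    rw [Finset.sum_comm]
    rw [Finset.sum_eq_single i]
    · rw [← Finset.mul_sum]
      have : ∀ x : Fin n → Bool, chi (x i) * chi (x i) = 1 := fun x => chi_mul_self _
      simp only [this]
      rw [sum_one_cube]; ring
    · intro k _ hk
      rw [← Finset.mul_sum, orth i k (Ne.symm hk), mul_zero]
    · intro h; exact absurd (Finset.mem_univ i) h
  rw [Finset.sum_congr rfl (fun i _ => this i), ← Finset.mul_sum]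

lemma lin_neg (x : Fin n → Bool) : lin A (fun i => !(x i)) = - lin A x := by
  unfold lin
  rw [← Finset.sum_neg_distrib]
  apply Finset.sum_congr rfl
  intro i _
  rw [chi_not]; ring

lemma sum_linpos_sq : (∑ x : Fin n → Bool, (max (lin A x) 0)^2) * 2 = 2^n * ∑ i, (sig A i)^2 := by
  rw [← sum_lin_sq]
  have hneg : Function.Involutive (fun x : Fin n → Bool => (fun i => !(x i))) := by
    intro x; funext i; simp
  have h : ∑ x : Fin n → Bool, (max (lin A x) 0)^2
      = ∑ x : Fin n → Bool, (max (- lin A x) 0)^2 := by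
    have := Fintype.sum_bijective _ hneg.bijective
      (fun x : Fin n → Bool => (max (lin A x) 0)^2)
      (fun x : Fin n → Bool => (max (- lin A x) 0)^2)
      (fun x => by simp only [lin_neg, neg_neg])
    exact this
  rw [mul_two]
  nth_rewrite 2 [h]
  rw [← Finset.sum_add_distrib]
  apply Finset.sum_congr rfl
  intro x _
  rcases le_total 0 (lin A x) with h' | h'
  · rw [max_eq_left h', max_eq_right (by linarith)]; ring
  · rw [max_eq_right h', max_eq_left (by linarith)]; ring

/-- The α/2 bound, unnormalized -/
lemma half_bound_raw : ∑ i, (sig A i)^2 ≤ (A.card : ℝ) * 2^n / 2 := by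
  set W := ∑ i, (sig A i)^2 with hW
  have hWnn : 0 ≤ W := Finset.sum_nonneg (fun i _ => sq_nonneg _)
  have h1 : W ≤ ∑ x ∈ A, max (lin A x) 0 := by
    rw [hW, ← sumA_lin]
    exact Finset.sum_le_sum (fun x _ => le_max_left _ _)
  have h2 : (∑ x ∈ A, max (lin A x) 0)^2 ≤ (A.card : ℝ) * ∑ x ∈ A, (max (lin A x) 0)^2 := by
    exact sq_sum_le_card_mul_sum_sq
  have h3 : ∑ x ∈ A, (max (lin A x) 0)^2 ≤ ∑ x : Fin n → Bool, (max (lin A x) 0)^2 :=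
    Finset.sum_le_sum_of_subset_of_nonneg (Finset.subset_univ A) (fun x _ _ => sq_nonneg _)
  have h4 : (∑ x : Fin n → Bool, (max (lin A x) 0)^2) = 2^n * W / 2 := by
    have := sum_linpos_sq A
    linarith
  have key : W^2 ≤ (A.card : ℝ) * (2^n * W / 2) := by
    calc W^2 ≤ (∑ x ∈ A, max (lin A x) 0)^2 := by
          apply sq_le_sq' <;> nlinarith [Finset.sum_nonneg (fun x (_ : x ∈ A) => le_max_right (lin A x) 0)]
      _ ≤ (A.card : ℝ) * ∑ x ∈ A, (max (lin A x) 0)^2 := h2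
      _ ≤ (A.card : ℝ) * (2^n * W / 2) := by
          rw [← h4]; exact mul_le_mul_of_nonneg_left h3 (Nat.cast_nonneg _)
  rcases eq_or_lt_of_le hWnn with h0 | h0
  · rw [← h0]; positivity
  · have : W * W ≤ ((A.card : ℝ) * 2^n / 2) * W := by nlinarith
    exact le_of_mul_le_mul_right (by nlinarith) h0

end Fourier

/-- binary Pinsker -/
lemma pinsker {p : ℝ} (h0 : 0 ≤ p) (h1 : p ≤ 1) :
    (2*p-1)^2/2 ≤ Real.log 2 + p * Real.log p + (1-p) * Real.log (1-p) := by
  set J : ℝ → ℝ := fun q => Real.log 2 + q * Real.log q + (1-q) * Real.log (1-q) - (2*q-1)^2/2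
    with hJ
  have hJcont : Continuous J := by
    have : J = fun q => Real.log 2 - Real.negMulLog q - Real.negMulLog (1-q) - (2*q-1)^2/2 := by
      funext q; simp [hJ, Real.negMulLog]; ring
    rw [this]; fun_prop
  have hconv : ConvexOn ℝ (Set.Icc (0:ℝ) 1) J := by
    have hint : interior (Set.Icc (0:ℝ) 1) = Set.Ioo (0:ℝ) 1 := interior_Icc
    apply convexOn_of_hasDerivWithinAt2_nonneg (convex_Icc 0 1) hJcont.continuousOn
      (f' := fun q => Real.log q - Real.log (1-q) - (4*q-2))
      (f'' := fun q => q⁻¹ + (1-q)⁻¹ - 4)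
    · intro x hx
      rw [hint] at hx
      obtain ⟨hx0, hx1⟩ := hx
      have d1 : HasDerivAt (fun q : ℝ => q * Real.log q) (Real.log x + 1) x :=
        Real.hasDerivAt_mul_log (ne_of_gt hx0)
      have dinner : HasDerivAt (fun q : ℝ => 1 - q) (-1) x := by
        simpa using (hasDerivAt_id x).const_sub 1
      have d2 : HasDerivAt (fun q : ℝ => (1-q) * Real.log (1-q)) ((Real.log (1-x) + 1) * (-1)) x := by
        have h := (Real.hasDerivAt_mul_log (x := 1 - x) (by linarith)).comp x dinner
        exact h
      have d3 : HasDerivAt (fun q : ℝ => (2*q-1)^2/2) (2*(2*x-1)) x := by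
        have : HasDerivAt (fun q : ℝ => 2*q-1) 2 x := by
          simpa using ((hasDerivAt_id x).const_mul 2).sub_const 1
        have := (this.pow 2).div_const 2
        exact this.congr_deriv (by ring)
      have : HasDerivAt J (Real.log x + 1 + (Real.log (1-x) + 1) * (-1) - 2*(2*x-1)) x := by
        exact (((d1.const_add (Real.log 2)).add d2).sub d3)
      refine (this.congr_deriv ?_).hasDerivWithinAt
      ring
    · intro x hx
      rw [hint] at hx
      obtain ⟨hx0, hx1⟩ := hx
      have d1 : HasDerivAt Real.log x⁻¹ x := Real.hasDerivAt_log (ne_of_gt hx0)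
      have dinner : HasDerivAt (fun q : ℝ => 1 - q) (-1) x := by
        simpa using (hasDerivAt_id x).const_sub 1
      have d2 : HasDerivAt (fun q : ℝ => Real.log (1-q)) ((1-x)⁻¹ * (-1)) x :=
        (Real.hasDerivAt_log (x := 1 - x) (by linarith)).comp x dinner
      have d3 : HasDerivAt (fun q : ℝ => 4*q-2) 4 x := by
        simpa using ((hasDerivAt_id x).const_mul 4).sub_const 2
      have : HasDerivAt (fun q => Real.log q - Real.log (1-q) - (4*q-2))
          (x⁻¹ - (1-x)⁻¹ * (-1) - 4) x := ((d1.sub d2).sub d3)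
      refine (this.congr_deriv ?_).hasDerivWithinAt
      ring
    · intro x hx
      rw [hint] at hx
      obtain ⟨hx0, hx1⟩ := hx
      have h4 : x * (1-x) ≤ 1/4 := by nlinarith [sq_nonneg (x - 1/2)]
      have hxpos : 0 < x * (1-x) := by nlinarith
      have : (4:ℝ) ≤ x⁻¹ + (1-x)⁻¹ := by
        rw [inv_add_inv (ne_of_gt hx0) (by linarith), le_div_iff₀ hxpos]
        nlinarith
      linarith
  have hsymm : J (1-p) = J p := by
    simp only [hJ]
    have e1 : 1 - (1-p) = p := by ring
    rw [e1]
    ring_nf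
  have hmem1 : p ∈ Set.Icc (0:ℝ) 1 := ⟨h0, h1⟩
  have hmem2 : (1-p) ∈ Set.Icc (0:ℝ) 1 := ⟨by linarith, by linarith⟩
  have hcomb := hconv.2 hmem1 hmem2 (by norm_num : (0:ℝ) ≤ 1/2) (by norm_num : (0:ℝ) ≤ 1/2)
    (by norm_num : (1/2:ℝ) + (1/2:ℝ) = 1)
  have hmid : (1/2 : ℝ) • p + (1/2 : ℝ) • (1-p) = 1/2 := by
    simp; ring
  rw [hmid, hsymm] at hcomb
  have hJhalf : J (1/2) = 0 := by
    simp only [hJ]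
    have : Real.log (1/2) = - Real.log 2 := by
      rw [one_div, Real.log_inv]
    norm_num
    rw [this]
    ring
  rw [hJhalf] at hcomb
  have : 0 ≤ J p := by
    simpa using hcomb
  simp only [hJ] at this
  linarith


lemma sig_eq (A : Finset (Fin n → Bool)) (i : Fin n) :
    sig A i = 2 * ((A.filter (fun x => x i = true)).card : ℝ) - A.card := by
  unfold sig
  rw [← Finset.sum_filter_add_sum_filter_not A (fun x => x i = true)]
  have h1 : ∑ x ∈ A.filter (fun x => x i = true), chi (x i)
      = ((A.filter (fun x => x i = true)).card : ℝ) := by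
    rw [Finset.sum_congr rfl (fun x hx => ?_), Finset.sum_const, nsmul_eq_mul, mul_one]
    have := (Finset.mem_filter.mp hx).2
    simp [chi, this]
  have h2 : ∑ x ∈ A.filter (fun x => ¬ (x i = true)), chi (x i)
      = -(((A.filter (fun x => ¬ (x i = true))).card : ℝ)) := by
    rw [Finset.sum_congr rfl (fun x hx => ?_), Finset.sum_const, nsmul_eq_mul, mul_neg_one]
    have := (Finset.mem_filter.mp hx).2
    simp only [Bool.not_eq_true] at this
    simp [chi, this]
  rw [h1, h2]
  have hcard := Finset.card_filter_add_card_filter_not (s := A)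
    (p := fun x => x i = true)
  have : ((A.filter (fun x => ¬ (x i = true))).card : ℝ)
      = (A.card : ℝ) - ((A.filter (fun x => x i = true)).card : ℝ) := by
    push_cast [← hcard]
    ring
  rw [this]; ring

lemma filter_not_card (A : Finset (Fin n → Bool)) (i : Fin n) :
    ((A.filter (fun x => ¬ (x i = true))).card : ℝ)
      = (A.card : ℝ) - ((A.filter (fun x => x i = true)).card : ℝ) := by
  have hcard := Finset.card_filter_add_card_filter_not (s := A)
    (p := fun x => x i = true)
  push_cast [← hcard]
  ring

lemma chang_raw (A : Finset (Fin n → Bool)) (hA : A.Nonempty) :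
    ∑ i, (sig A i)^2 ≤ (A.card:ℝ)^2 * (2 * (n * Real.log 2 - Real.log (A.card))) := by
  set M : ℝ := (A.card : ℝ) with hMdef
  have hM : 0 < M := by
    simp only [hMdef]
    exact_mod_cast Finset.card_pos.mpr hA
  set T : Fin n → ℝ := fun i => ((A.filter (fun x => x i = true)).card : ℝ) with hTdef
  have hT0 : ∀ i, 0 ≤ T i := fun i => Nat.cast_nonneg _
  have hTM : ∀ i, T i ≤ M := by
    intro i
    simp only [hTdef, hMdef]
    exact_mod_cast Finset.card_filter_le A _
  set q : Fin n → Bool → ℝ := fun i b => if b then T i / M else 1 - T i / M with hqdef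
  have hq0 : ∀ i b, 0 ≤ q i b := by
    intro i b
    simp only [hqdef]
    cases b
    · simp only [Bool.false_eq_true, if_false]
      have := div_le_one_of_le₀ (hTM i) hM.le
      linarith
    · simp only [if_true]
      positivity
  have hqx : ∀ x ∈ A, ∀ i, 1/M ≤ q i (x i) := by
    intro x hx i
    by_cases h : x i = true
    · have hmem : x ∈ A.filter (fun y => y i = true) := Finset.mem_filter.mpr ⟨hx, h⟩
      have h1 : (1:ℝ) ≤ T i := by
        simp only [hTdef]
        exact_mod_cast Finset.card_pos.mpr ⟨x, hmem⟩
      simp only [hqdef, h, if_true]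
      exact (div_le_div_iff_of_pos_right hM).mpr h1
    · have hmem : x ∈ A.filter (fun y => ¬ (y i = true)) := Finset.mem_filter.mpr ⟨hx, h⟩
      have h1 : (1:ℝ) ≤ M - T i := by
        have hc : (1:ℝ) ≤ ((A.filter (fun y => ¬ (y i = true))).card : ℝ) := by
          exact_mod_cast Finset.card_pos.mpr ⟨x, hmem⟩
        have := filter_not_card A i
        simp only [hTdef, hMdef]
        rw [← this]
        exact hc
      have hxi : x i = false := by simpa using h
      simp only [hqdef, hxi, Bool.false_eq_true, if_false]
      have : (M - T i)/M = 1 - T i / M := by field_simp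
      rw [← this]
      exact (div_le_div_iff_of_pos_right hM).mpr h1
  have hqpos : ∀ x ∈ A, ∀ i, 0 < q i (x i) :=
    fun x hx i => lt_of_lt_of_le (by positivity) (hqx x hx i)
  have prodpos : ∀ x ∈ A, 0 < ∏ i, q i (x i) :=
    fun x hx => Finset.prod_pos (fun i _ => hqpos x hx i)
  have sum_univ_prod : ∑ x : Fin n → Bool, ∏ i, q i (x i) = 1 := by
    rw [← Fintype.prod_sum (fun i (b : Bool) => q i b)]
    have : ∀ i : Fin n, ∑ b : Bool, q i b = 1 := by
      intro i
      rw [Fintype.sum_bool]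
      simp only [hqdef, if_true, Bool.false_eq_true, if_false]
      ring
    rw [Finset.prod_congr rfl (fun i _ => this i), Finset.prod_const_one]
  have gibbs : ∑ x ∈ A, Real.log (M * ∏ i, q i (x i)) ≤ 0 := by
    have hstep : ∀ x ∈ A, Real.log (M * ∏ i, q i (x i)) ≤ M * ∏ i, q i (x i) - 1 :=
      fun x hx => Real.log_le_sub_one_of_pos (mul_pos hM (prodpos x hx))
    have hsub : ∑ x ∈ A, ∏ i, q i (x i) ≤ ∑ x : Fin n → Bool, ∏ i, q i (x i) :=
      Finset.sum_le_sum_of_subset_of_nonneg (Finset.subset_univ _)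
        (fun x _ _ => Finset.prod_nonneg (fun i _ => hq0 i _))
    calc ∑ x ∈ A, Real.log (M * ∏ i, q i (x i))
        ≤ ∑ x ∈ A, (M * ∏ i, q i (x i) - 1) := Finset.sum_le_sum hstep
      _ = M * (∑ x ∈ A, ∏ i, q i (x i)) - M := by
          rw [Finset.sum_sub_distrib, ← Finset.mul_sum, Finset.sum_const, nsmul_eq_mul, mul_one]
      _ ≤ M * (∑ x : Fin n → Bool, ∏ i, q i (x i)) - M := by
          have := mul_le_mul_of_nonneg_left hsub hM.le
          linarith
      _ = 0 := by rw [sum_univ_prod]; ring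
  have expand : ∀ x ∈ A, Real.log (M * ∏ i, q i (x i))
      = Real.log M + ∑ i, Real.log (q i (x i)) := by
    intro x hx
    rw [Real.log_mul (ne_of_gt hM) (ne_of_gt (prodpos x hx))]
    congr 1
    rw [Real.log_prod]
    intro i _
    exact ne_of_gt (hqpos x hx i)
  have gibbs2 : M * Real.log M + ∑ i, ∑ x ∈ A, Real.log (q i (x i)) ≤ 0 := by
    have h := gibbs
    rw [Finset.sum_congr rfl expand, Finset.sum_add_distrib, Finset.sum_const,
      nsmul_eq_mul, Finset.sum_comm] at h
    linarith [h]
  have percoord : ∀ i, ∑ x ∈ A, Real.log (q i (x i))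
      = T i * Real.log (T i / M) + (M - T i) * Real.log (1 - T i / M) := by
    intro i
    rw [← Finset.sum_filter_add_sum_filter_not A (fun x => x i = true)]
    have e1 : ∀ x ∈ A.filter (fun x => x i = true),
        Real.log (q i (x i)) = Real.log (T i / M) := by
      intro x hx
      have hxi := (Finset.mem_filter.mp hx).2
      simp only [hqdef, hxi, if_true]
    have e2 : ∀ x ∈ A.filter (fun x => ¬ (x i = true)),
        Real.log (q i (x i)) = Real.log (1 - T i / M) := by
      intro x hx
      have hxi := (Finset.mem_filter.mp hx).2
      have hxi' : x i = false := by simpa using hxi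
      simp only [hqdef, hxi', Bool.false_eq_true, if_false]
    have h1 : ∑ x ∈ A.filter (fun x => x i = true), Real.log (q i (x i))
        = T i * Real.log (T i / M) := by
      rw [Finset.sum_congr rfl e1, Finset.sum_const, nsmul_eq_mul]
    have h2 : ∑ x ∈ A.filter (fun x => ¬ (x i = true)), Real.log (q i (x i))
        = (M - T i) * Real.log (1 - T i / M) := by
      rw [Finset.sum_congr rfl e2, Finset.sum_const, nsmul_eq_mul, filter_not_card A i]
    rw [h1, h2]
  have entropy : Real.log M ≤ ∑ i, -( (T i / M) * Real.log (T i / M)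
      + (1 - T i / M) * Real.log (1 - T i / M) ) := by
    have h := gibbs2
    rw [Finset.sum_congr rfl (fun i _ => percoord i)] at h
    have hexp : ∑ i, -( (T i / M) * Real.log (T i / M)
        + (1 - T i / M) * Real.log (1 - T i / M) )
        = -(1/M) * ∑ i, (T i * Real.log (T i / M) + (M - T i) * Real.log (1 - T i / M)) := by
      rw [Finset.mul_sum]
      apply Finset.sum_congr rfl
      intro i _
      field_simp
    rw [hexp]
    rw [← mul_le_mul_iff_right₀ hM]
    have : M * (-(1/M) * ∑ i, (T i * Real.log (T i / M) + (M - T i) * Real.log (1 - T i / M)))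
        = -(∑ i, (T i * Real.log (T i / M) + (M - T i) * Real.log (1 - T i / M))) := by
      field_simp
    rw [this]
    linarith
  have sum_sq : ∑ i, (2 * (T i / M) - 1)^2 ≤ 2 * (n * Real.log 2 - Real.log M) := by
    have h1 : ∀ i : Fin n, (2 * (T i / M) - 1)^2 ≤ 2 * Real.log 2
        + 2 * ((T i / M) * Real.log (T i / M) + (1 - T i / M) * Real.log (1 - T i / M)) := by
      intro i
      have hp0 : 0 ≤ T i / M := by positivity
      have hp1 : T i / M ≤ 1 := div_le_one_of_le₀ (hTM i) hM.le
      have := pinsker hp0 hp1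
      nlinarith [this]
    calc ∑ i, (2 * (T i / M) - 1)^2
        ≤ ∑ i : Fin n, (2 * Real.log 2
          + 2 * ((T i / M) * Real.log (T i / M) + (1 - T i / M) * Real.log (1 - T i / M))) :=
          Finset.sum_le_sum (fun i _ => h1 i)
      _ = n * (2 * Real.log 2) + 2 * ∑ i, ((T i / M) * Real.log (T i / M)
          + (1 - T i / M) * Real.log (1 - T i / M)) := by
          rw [Finset.sum_add_distrib, Finset.sum_const, ← Finset.mul_sum, Finset.card_univ,
            Fintype.card_fin, nsmul_eq_mul]
      _ ≤ n * (2 * Real.log 2) + 2 * (- Real.log M) := by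
          have h2 : ∑ i, ((T i / M) * Real.log (T i / M)
              + (1 - T i / M) * Real.log (1 - T i / M)) ≤ - Real.log M := by
            have := entropy
            rw [Finset.sum_neg_distrib] at this
            linarith
          linarith
      _ = 2 * (n * Real.log 2 - Real.log M) := by ring
  have sig_sq : ∑ i, (sig A i)^2 = M^2 * ∑ i, (2 * (T i / M) - 1)^2 := by
    rw [Finset.mul_sum]
    apply Finset.sum_congr rfl
    intro i _
    have h : M * (2 * (T i / M) - 1) = 2 * T i - M := by
      field_simp
    have h2 : sig A i = 2 * T i - M := by rw [sig_eq A i]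
    rw [h2, ← h]
    ring
  rw [sig_sq]
  calc M^2 * ∑ i, (2 * (T i / M) - 1)^2
      ≤ M^2 * (2 * (n * Real.log 2 - Real.log M)) :=
        mul_le_mul_of_nonneg_left sum_sq (sq_nonneg M)
    _ = (A.card:ℝ)^2 * (2 * (n * Real.log 2 - Real.log (A.card))) := by rw [hMdef]


lemma neg_log_le {c L : ℝ} (hc : 0 < c) (h : 1 ≤ Real.exp L * c) : - Real.log c ≤ L := by
  have h2 : Real.exp (-L) ≤ c := by
    rw [Real.exp_neg, inv_le_iff_one_le_mul₀ (Real.exp_pos L)]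
    nlinarith [h]
  have := (Real.le_log_iff_exp_le hc).mpr h2
  linarith

lemma log_le_neg {c L B : ℝ} (hc : 0 < c) (hB : Real.exp L ≤ B) (h : c * B ≤ 1) :
    Real.log c ≤ -L := by
  have hBpos : 0 < B := lt_of_lt_of_le (Real.exp_pos L) hB
  have h2 : c ≤ Real.exp (-L) := by
    rw [Real.exp_neg, ← one_div, le_div_iff₀ (Real.exp_pos L)]
    nlinarith
  calc Real.log c ≤ Real.log (Real.exp (-L)) :=
        Real.log_le_log hc h2
    _ = -L := Real.log_exp _

lemma e1_lb : (2.7182818283 : ℝ) ≤ Real.exp 1 := Real.exp_one_gt_d9.le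

lemma exp4_lb : (54.59815 : ℝ) ≤ Real.exp 4 := by
  have h : Real.exp 4 = (Real.exp 1)^4 := by
    rw [← Real.exp_nat_mul]; norm_num
  rw [h]
  calc (54.59815 : ℝ) ≤ (2.7182818283:ℝ)^4 := by norm_num
    _ ≤ (Real.exp 1)^4 := pow_le_pow_left₀ (by norm_num) e1_lb 4

lemma exp2_lb : (7.3890559 : ℝ) ≤ Real.exp 2 := by
  have h : Real.exp 2 = (Real.exp 1)^2 := by
    rw [← Real.exp_nat_mul]; norm_num
  rw [h]
  calc (7.3890559 : ℝ) ≤ (2.7182818283:ℝ)^2 := by norm_num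
    _ ≤ (Real.exp 1)^2 := pow_le_pow_left₀ (by norm_num) e1_lb 2

lemma E1 : (110.1443 : ℝ) ≤ Real.exp 4.7018046 := by
  have hsplit : Real.exp 4.7018046 = Real.exp 4 * Real.exp 0.7018046 := by
    rw [← Real.exp_add]; norm_num
  have hser : (2.0173688 : ℝ) ≤ Real.exp 0.7018046 := by
    have h := Real.sum_le_exp_of_nonneg (x := 0.7018046) (by norm_num) 7
    have h2 : (2.0173688 : ℝ) ≤ ∑ i ∈ Finset.range 7, (0.7018046:ℝ) ^ i / i.factorial := by
      simp only [Finset.sum_range_succ, Finset.sum_range_zero, Nat.factorial]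
      norm_num
    linarith
  rw [hsplit]
  nlinarith [exp4_lb, Real.exp_pos 4, Real.exp_pos 0.7018046]

lemma E2 : (10 : ℝ) ≤ Real.exp 2.3117 := by
  have hsplit : Real.exp 2.3117 = Real.exp 2 * Real.exp 0.3117 := by
    rw [← Real.exp_add]; norm_num
  have hser : (1.3655 : ℝ) ≤ Real.exp 0.3117 := by
    have h := Real.sum_le_exp_of_nonneg (x := 0.3117) (by norm_num) 6
    have h2 : (1.3655 : ℝ) ≤ ∑ i ∈ Finset.range 6, (0.3117:ℝ) ^ i / i.factorial := by
      simp only [Finset.sum_range_succ, Finset.sum_range_zero, Nat.factorial]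
      norm_num
    linarith
  rw [hsplit]
  nlinarith [exp2_lb, Real.exp_pos 2, Real.exp_pos 0.3117]

lemma E3 : (8.6957 : ℝ) ≤ Real.exp 2.1737 := by
  have hsplit : Real.exp 2.1737 = Real.exp 2 * Real.exp 0.1737 := by
    rw [← Real.exp_add]; norm_num
  have hser : (1.1896 : ℝ) ≤ Real.exp 0.1737 := by
    have h := Real.sum_le_exp_of_nonneg (x := 0.1737) (by norm_num) 5
    have h2 : (1.1896 : ℝ) ≤ ∑ i ∈ Finset.range 5, (0.1737:ℝ) ^ i / i.factorial := by
      simp only [Finset.sum_range_succ, Finset.sum_range_zero, Nat.factorial]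
      norm_num
    linarith
  rw [hsplit]
  nlinarith [exp2_lb, Real.exp_pos 2, Real.exp_pos 0.1737]

lemma E4 : Real.exp 1.5 ≤ 4.49 := by
  have hsplit : Real.exp 1.5 = Real.exp 0.75 * Real.exp 0.75 := by
    rw [← Real.exp_add]; norm_num
  have hub : Real.exp 0.75 ≤ 2.1172 := by
    have h := Real.exp_bound' (x := 0.75) (by norm_num) (by norm_num) (n := 5) (by norm_num)
    have h2 : (∑ m ∈ Finset.range 5, (0.75:ℝ) ^ m / m.factorial)
        + (0.75:ℝ)^5 * (5+1) / ((5:ℕ).factorial * 5) ≤ 2.1172 := by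
      simp only [Finset.sum_range_succ, Finset.sum_range_zero, Nat.factorial]
      norm_num
    calc Real.exp 0.75 ≤ _ := h
      _ ≤ 2.1172 := by exact_mod_cast h2
  rw [hsplit]
  nlinarith [Real.exp_pos 0.75]

lemma NL1 : - Real.log 0.009079 ≤ 4.7018046 :=
  neg_log_le (by norm_num) (by nlinarith [E1])

lemma NL2 : - Real.log 0.1 ≤ 2.3117 :=
  neg_log_le (by norm_num) (by nlinarith [E2])

lemma NL3 : - Real.log 0.115 ≤ 2.1737 :=
  neg_log_le (by norm_num) (by nlinarith [E3])

lemma NL4 : Real.log 0.115 ≤ -1.5 :=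
  log_le_neg (by norm_num) E4 (by norm_num)

lemma NL5 : Real.log 0.009079 ≤ -1 := by
  have := log_le_neg (c := 0.009079) (L := 1) (B := 2.7182818286) (by norm_num)
    Real.exp_one_lt_d9.le (by norm_num)
  linarith


/-- the Chang bound function `α ↦ -2α² log α` -/
noncomputable def gfun (x : ℝ) : ℝ := -(2 * (x^2 * Real.log x))

lemma gfun_convex : ConvexOn ℝ (Set.Icc (0.009079:ℝ) 0.115) gfun := by
  have hint : interior (Set.Icc (0.009079:ℝ) 0.115) = Set.Ioo (0.009079:ℝ) 0.115 := interior_Icc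
  have hcont : Continuous gfun := by
    have : gfun = fun x => 2 * x * Real.negMulLog x := by
      funext x; simp [gfun, Real.negMulLog]; ring
    rw [this]; fun_prop
  apply convexOn_of_hasDerivWithinAt2_nonneg (convex_Icc _ _) hcont.continuousOn
    (f' := fun x => -(4 * x * Real.log x + 2 * x))
    (f'' := fun x => -(4 * Real.log x + 6))
  · intro x hx
    rw [hint] at hx
    obtain ⟨hx0, hx1⟩ := hx
    have hx0' : (0:ℝ) < x := by linarith
    have d1 : HasDerivAt (fun y : ℝ => y^2 * Real.log y)
        (2 * x * Real.log x + x) x := by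
      have h := (hasDerivAt_pow 2 x).mul (Real.hasDerivAt_log (ne_of_gt hx0'))
      exact h.congr_deriv (by field_simp; ring)
    have heq : gfun = fun y : ℝ => (-(2:ℝ)) * (y^2 * Real.log y) := by
      funext y; simp [gfun]
    have : HasDerivAt gfun ((-(2:ℝ)) * (2 * x * Real.log x + x)) x := by
      rw [heq]; exact d1.const_mul (-2)
    refine (this.congr_deriv ?_).hasDerivWithinAt
    ring
  · intro x hx
    rw [hint] at hx
    obtain ⟨hx0, hx1⟩ := hx
    have hx0' : (0:ℝ) < x := by linarith
    have d1 : HasDerivAt (fun y : ℝ => y * Real.log y) (Real.log x + 1) x :=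
      Real.hasDerivAt_mul_log (ne_of_gt hx0')
    have : HasDerivAt (fun y => -(4 * y * Real.log y + 2 * y))
        (-(4 * (Real.log x + 1) + 2)) x := by
      have h4 : HasDerivAt (fun y : ℝ => 4 * (y * Real.log y)) (4 * (Real.log x + 1)) x :=
        d1.const_mul 4
      have h2 : HasDerivAt (fun y : ℝ => 2 * y) (2:ℝ) x := by
        simpa using (hasDerivAt_id x).const_mul 2
      have := (h4.add h2).neg
      have e : (fun y : ℝ => -(4 * y * Real.log y + 2 * y))
          = -((fun y : ℝ => 4 * (y * Real.log y)) + fun y => 2 * y) := by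
        funext y; simp only [Pi.neg_apply, Pi.add_apply]; ring
      rw [e]; exact this
    refine (this.congr_deriv ?_).hasDerivWithinAt
    ring
  · intro x hx
    rw [hint] at hx
    obtain ⟨hx0, hx1⟩ := hx
    have hlog : Real.log x ≤ Real.log 0.115 :=
      Real.log_le_log (by linarith) hx1.le
    have := NL4
    simp only [neg_nonneg]
    linarith

/-- chord bound for convex functions -/
lemma chord {s : Set ℝ} {g : ℝ → ℝ} (hg : ConvexOn ℝ s g) {x₁ x₂ c : ℝ}
    (h1 : x₁ ∈ s) (h2 : x₂ ∈ s) (hlt : x₁ < x₂) (hc1 : x₁ ≤ c) (hc2 : c ≤ x₂) :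
    (x₂ - x₁) * g c ≤ (x₂ - c) * g x₁ + (c - x₁) * g x₂ := by
  have hd : (0:ℝ) < x₂ - x₁ := by linarith
  have ha : (0:ℝ) ≤ (x₂ - c)/(x₂ - x₁) := div_nonneg (by linarith) hd.le
  have hb : (0:ℝ) ≤ (c - x₁)/(x₂ - x₁) := by
    apply div_nonneg (by linarith) hd.le
  have hab : (x₂ - c)/(x₂ - x₁) + (c - x₁)/(x₂ - x₁) = 1 := by
    field_simp
    ring
  have hcomb := hg.2 h1 h2 ha hb hab
  have hpt : ((x₂ - c)/(x₂ - x₁)) • x₁ + ((c - x₁)/(x₂ - x₁)) • x₂ = c := by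
    simp only [smul_eq_mul]
    field_simp
    ring
  rw [hpt] at hcomb
  have := mul_le_mul_of_nonneg_left hcomb hd.le
  simp only [smul_eq_mul] at this
  calc (x₂ - x₁) * g c ≤ (x₂ - x₁) * ((x₂ - c)/(x₂ - x₁) * g x₁ + (c - x₁)/(x₂ - x₁) * g x₂) :=
        this
    _ = (x₂ - c) * g x₁ + (c - x₁) * g x₂ := by
        field_simp


lemma gE : gfun 0.009079 ≤ 2 * 0.009079^2 * 4.7018046 := by
  have := NL1
  simp only [gfun]
  nlinarith [this]

lemma g1 : gfun 0.1 ≤ 2 * 0.1^2 * 2.3117 := by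
  have := NL2
  simp only [gfun]
  nlinarith [this]

lemma gU : gfun 0.115 ≤ 2 * 0.115^2 * 2.1737 := by
  have := NL3
  simp only [gfun]
  nlinarith [this]

/-- Case A : the tail-mass bound for small α -/
lemma caseA {α : ℝ} (h0 : 0 ≤ α) (h1 : α ≤ 0.009079) : gfun α ≤ 0.0853754 * α := by
  rcases eq_or_lt_of_le h0 with h | h
  · simp [gfun, ← h]
  · have hmono : α * (- Real.log α) ≤ 0.009079 * (- Real.log 0.009079) := by
      have hdiv : Real.log 0.009079 - Real.log α = Real.log (0.009079 / α) :=
        (Real.log_div (by norm_num) (ne_of_gt h)).symm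
      have hls : Real.log (0.009079 / α) ≤ 0.009079 / α - 1 :=
        Real.log_le_sub_one_of_pos (by positivity)
      have hmul : α * Real.log (0.009079 / α) ≤ 0.009079 - α := by
        have := mul_le_mul_of_nonneg_left hls h.le
        calc α * Real.log (0.009079 / α) ≤ α * (0.009079 / α - 1) := this
          _ = 0.009079 - α := by field_simp
      have hge1 : (1:ℝ) ≤ - Real.log 0.009079 := by linarith [NL5]
      nlinarith [hmul, hdiv, hge1, sub_nonneg.mpr h1]
    have hcap : (0.009079:ℝ) * (- Real.log 0.009079) ≤ 0.009079 * 4.7018046 := by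
      nlinarith [NL1]
    simp only [gfun]
    nlinarith [hmono, hcap, h.le]

/-- Case B1 : chord bound on [ε, 0.1] -/
lemma caseB1 {c : ℝ} (h1 : 0.009079 ≤ c) (h2 : c ≤ 0.1) :
    gfun c ≤ c/2 - 0.003764376 := by
  have hch := chord gfun_convex (x₁ := 0.009079) (x₂ := 0.1) (c := c)
    (by constructor <;> norm_num) (by constructor <;> norm_num) (by norm_num) h1 h2
  nlinarith [hch, gE, g1,
    mul_nonneg (by linarith : (0:ℝ) ≤ 0.1 - c)
      (by linarith [gE] : (0:ℝ) ≤ 2 * 0.009079^2 * 4.7018046 - gfun 0.009079),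
    mul_nonneg (by linarith : (0:ℝ) ≤ c - 0.009079)
      (by linarith [g1] : (0:ℝ) ≤ 2 * 0.1^2 * 2.3117 - gfun 0.1)]

/-- Case B2 : chord bound on [0.1, 0.115] -/
lemma caseB2 {v : ℝ} (h1 : 0.1 ≤ v) (h2 : v ≤ 0.115) :
    gfun v ≤ v/2 - 0.2510666 * (0.115 - v) := by
  have hch := chord gfun_convex (x₁ := 0.1) (x₂ := 0.115) (c := v)
    (by constructor <;> norm_num) (by constructor <;> norm_num) (by norm_num) h1 h2
  nlinarith [hch, g1, gU,
    mul_nonneg (by linarith : (0:ℝ) ≤ 0.115 - v)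
      (by linarith [g1] : (0:ℝ) ≤ 2 * 0.1^2 * 2.3117 - gfun 0.1),
    mul_nonneg (by linarith : (0:ℝ) ≤ v - 0.1)
      (by linarith [gU] : (0:ℝ) ≤ 2 * 0.115^2 * 2.1737 - gfun 0.115)]


end S15

open S15

/-- if the 8 most likely values of `f` miss mass ≥ 0.009079, then the
level-one Fourier mass Σ_{i,j} F_{ij}² is < 0.4962357. -/
theorem stmt15 (n : ℕ) (f : (Fin n → Bool) → Fin n)
    (F : Fin n → Fin n → ℝ)
    (hF : ∀ i j, F i j = Ex n (fun y => chi (y i) * (if f y = j then 1 else 0)))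
    (a : Fin n → ℝ) (ha : ∀ j, a j = Pr n (fun y => f y = j))
    (Ω : Finset (Fin n)) (hcard : Ω.card = min 8 n)
    (hlargest : ∀ j ∈ Ω, ∀ j' ∉ Ω, a j' ≤ a j)
    (hmiss : 0.009079 ≤ Pr n (fun y => f y ∉ Ω)) :
    ∑ i : Fin n, ∑ j : Fin n, (F i j) ^ 2 < 0.4962357 := by
  classical
  have pow_pos : (0:ℝ) < 2^n := by positivity
  set A : Fin n → Finset (Fin n → Bool) := fun j => univ.filter (fun x => f x = j) with hAdef
  have hPr : ∀ p : (Fin n → Bool) → Prop,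
      Pr n p = (∑ x : Fin n → Bool, if p x then (1:ℝ) else 0)/2^n := fun p => rfl
  have e : ∀ j, a j = (∑ x : Fin n → Bool, if f x = j then (1:ℝ) else 0)/2^n := by
    intro j; rw [ha j, hPr]; congr!
  have ha' : ∀ j, a j = ((A j).card : ℝ) / 2^n := by
    intro j
    rw [e j]
    congr 1
    rw [Finset.sum_boole]
  have hF' : ∀ i j, F i j = (∑ x ∈ A j, chi (x i)) / 2^n := by
    intro i j
    rw [hF i j]
    unfold Ex
    congr 1
    simp only []
    rw [Finset.sum_filter]
    apply Finset.sum_congr rfl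
    intro x _
    rw [mul_ite, mul_one, mul_zero]
  have ha0 : ∀ j, 0 ≤ a j := by
    intro j; rw [ha' j]; positivity
  have hsum1 : ∑ j, a j = 1 := by
    rw [Finset.sum_congr rfl (fun j (_ : j ∈ (univ : Finset (Fin n))) => e j), ← Finset.sum_div,
      Finset.sum_comm]
    have h1 : ∀ x : Fin n → Bool, (∑ j, if f x = j then (1:ℝ) else 0) = 1 := by
      intro x; simp [Finset.sum_ite_eq]
    rw [Finset.sum_congr rfl (fun x _ => h1 x), sum_one_cube]
    field_simp
  have htail : Pr n (fun y => f y ∉ Ω) = ∑ j ∈ Ωᶜ, a j := by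
    rw [hPr, Finset.sum_congr rfl (fun j (_ : j ∈ Ωᶜ) => e j), ← Finset.sum_div]
    congr 1
    rw [Finset.sum_comm]
    apply Finset.sum_congr rfl
    intro x _
    simp [Finset.sum_ite_eq, Finset.mem_compl]
  have hn9 : 9 ≤ n := by
    by_contra hlt
    push_neg at hlt
    have hle : n ≤ 8 := by omega
    have hcard' : Ω.card = Fintype.card (Fin n) := by
      rw [hcard, Fintype.card_fin]; omega
    have huniv : Ω = univ := Finset.eq_univ_of_card Ω hcard'
    have hz : Pr n (fun y => f y ∉ Ω) = 0 := by
      rw [hPr]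
      rw [Finset.sum_eq_zero, zero_div]
      intro x _
      simp [huniv]
    rw [hz] at hmiss
    norm_num at hmiss
  have hΩ8 : Ω.card = 8 := by rw [hcard]; omega
  set W : Fin n → ℝ := fun j => ∑ i, (F i j)^2 with hWdef
  have hWeq : ∀ j, W j = (∑ i, (sig (A j) i)^2) / ((2:ℝ)^n)^2 := by
    intro j
    simp only [hWdef]
    rw [Finset.sum_div]
    apply Finset.sum_congr rfl
    intro i _
    rw [hF' i j, div_pow]
    rfl
  have hWhalf : ∀ j, W j ≤ a j / 2 := by
    intro j
    rw [hWeq j, ha' j]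
    have hraw := half_bound_raw (A j)
    have h2 := (div_le_div_iff_of_pos_right (show (0:ℝ) < ((2:ℝ)^n)^2 by positivity)).mpr hraw
    have e3 : (((A j).card : ℝ) * (2:ℝ)^n / 2) / ((2:ℝ)^n)^2 = (((A j).card : ℝ) / 2^n)/2 := by
      generalize ((A j).card : ℝ) = c
      field_simp
    linarith [h2, e3.le, e3.ge]
  have hWchang : ∀ j, 0 < a j → W j ≤ gfun (a j) := by
    intro j hpos
    have hcard0 : (A j).Nonempty := by
      rw [← Finset.card_pos]
      by_contra hc
      push_neg at hc
      have h0 : (A j).card = 0 := by omega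
      rw [ha' j, h0] at hpos
      norm_num at hpos
    have hraw := chang_raw (A j) hcard0
    have hM : (0:ℝ) < ((A j).card : ℝ) := by exact_mod_cast Finset.card_pos.mpr hcard0
    rw [hWeq j]
    have h2 := (div_le_div_iff_of_pos_right (show (0:ℝ) < ((2:ℝ)^n)^2 by positivity)).mpr hraw
    have e3 : (((A j).card:ℝ)^2 * (2 * (n * Real.log 2 - Real.log ((A j).card)))) / ((2:ℝ)^n)^2
        = gfun (a j) := by
      rw [ha' j]
      unfold gfun
      have hlog : Real.log (((A j).card : ℝ) / 2^n)
          = Real.log ((A j).card : ℝ) - n * Real.log 2 := by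
        rw [Real.log_div (ne_of_gt hM) (ne_of_gt pow_pos), Real.log_pow]
      rw [hlog]
      generalize ((A j).card : ℝ) = c at hM ⊢
      field_simp
      all_goals ring
    linarith [h2, e3.le, e3.ge]
  have hgoal : ∑ i : Fin n, ∑ j : Fin n, (F i j)^2 = ∑ j, W j := Finset.sum_comm
  rw [hgoal]
  have main : ∀ (S : Finset (Fin n)) (δ : Fin n → ℝ),
      (∀ j ∈ S, W j ≤ a j / 2 - δ j) → (0.003764376 : ℝ) ≤ ∑ j ∈ S, δ j →
      ∑ j, W j < 0.4962357 := by
    intro S δ hS hsum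
    have hsplit : ∑ j, W j = ∑ j ∈ S, W j + ∑ j ∈ Sᶜ, W j :=
      (Finset.sum_add_sum_compl S W).symm
    have h1 : ∑ j ∈ S, W j ≤ ∑ j ∈ S, (a j / 2) - ∑ j ∈ S, δ j := by
      rw [← Finset.sum_sub_distrib]
      exact Finset.sum_le_sum hS
    have h2 : ∑ j ∈ Sᶜ, W j ≤ ∑ j ∈ Sᶜ, (a j / 2) :=
      Finset.sum_le_sum (fun j _ => hWhalf j)
    have h3 : ∑ j ∈ S, (a j / 2) + ∑ j ∈ Sᶜ, (a j / 2) = 1/2 := by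
      rw [Finset.sum_add_sum_compl, ← Finset.sum_div, hsum1]
    linarith
  have hCne : (Ωᶜ : Finset (Fin n)).Nonempty := by
    rw [← Finset.card_pos, Finset.card_compl, hΩ8, Fintype.card_fin]
    omega
  obtain ⟨j₀, hj₀C, hj₀max⟩ := Finset.exists_max_image (Ωᶜ : Finset (Fin n)) a hCne
  have hj₀notΩ : j₀ ∉ Ω := Finset.mem_compl.mp hj₀C
  have htail_ge : (0.009079:ℝ) ≤ ∑ j ∈ Ωᶜ, a j := by
    rw [← htail]; exact hmiss
  by_cases hA1 : a j₀ ≤ 0.009079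
  · -- Case A
    apply main Ωᶜ (fun j => 0.4146246 * a j)
    · intro j hj
      show W j ≤ a j / 2 - 0.4146246 * a j
      have haj : a j ≤ 0.009079 := le_trans (hj₀max j hj) hA1
      rcases eq_or_lt_of_le (ha0 j) with h0 | h0
      · have := hWhalf j
        linarith [h0.le, h0.ge]
      · have h1 := hWchang j h0
        have h2 := caseA (ha0 j) haj
        linarith
    · calc (0.003764376:ℝ) ≤ 0.4146246 * 0.009079 := by norm_num
        _ ≤ 0.4146246 * ∑ j ∈ Ωᶜ, a j := by nlinarith [htail_ge]
        _ = ∑ j ∈ Ωᶜ, 0.4146246 * a j := Finset.mul_sum _ _ _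
  · push_neg at hA1
    have hΩge : ∀ j ∈ Ω, a j₀ ≤ a j := fun j hj => hlargest j hj j₀ hj₀notΩ
    have hsplitΩ : ∑ j ∈ Ω, a j + ∑ j ∈ Ωᶜ, a j = 1 := by
      rw [Finset.sum_add_sum_compl, hsum1]
    have h8c : 8 * a j₀ ≤ ∑ j ∈ Ω, a j := by
      calc 8 * a j₀ = ∑ _j ∈ Ω, a j₀ := by
            rw [Finset.sum_const, hΩ8, nsmul_eq_mul]; norm_num
        _ ≤ ∑ j ∈ Ω, a j := Finset.sum_le_sum hΩge
    have hc_tail : a j₀ ≤ ∑ j ∈ Ωᶜ, a j :=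
      Finset.single_le_sum (fun j _ => ha0 j) hj₀C
    have hc19 : a j₀ ≤ 1/9 := by linarith
    by_cases hB1 : a j₀ ≤ 0.1
    · -- Case B1
      apply main {j₀} (fun _ => (0.003764376:ℝ))
      · intro j hj
        rw [Finset.mem_singleton] at hj
        subst hj
        show W j ≤ a j / 2 - 0.003764376
        have h1 := hWchang j (by linarith)
        have h2 := caseB1 hA1.le hB1
        linarith
      · rw [Finset.sum_singleton]
    · push_neg at hB1
      apply main (insert j₀ Ω) (fun j => 0.2510666 * (0.115 - a j))
      · intro j hj
        show W j ≤ a j / 2 - 0.2510666 * (0.115 - a j)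
        have hjge : 0.1 < a j := by
          rcases Finset.mem_insert.mp hj with h | h
          · subst h; exact hB1
          · exact lt_of_lt_of_le hB1 (hΩge j h)
        by_cases hv : a j ≤ 0.115
        · have h1 := hWchang j (by linarith)
          have h2 := caseB2 hjge.le hv
          linarith
        · push_neg at hv
          have := hWhalf j
          nlinarith
      · have hcS : (insert j₀ Ω).card = 9 := by
          rw [Finset.card_insert_of_notMem hj₀notΩ, hΩ8]
        have hsS : ∑ j ∈ insert j₀ Ω, a j ≤ 1 := by
          rw [Finset.sum_insert hj₀notΩ]
          linarith
        have e : ∑ j ∈ insert j₀ Ω, ((0.2510666:ℝ) * (0.115 - a j))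
            = 0.2510666 * (0.115 * 9 - ∑ j ∈ insert j₀ Ω, a j) := by
          rw [← Finset.mul_sum, Finset.sum_sub_distrib, Finset.sum_const, hcS, nsmul_eq_mul]
          ring
        rw [e]
        nlinarith [hsS]
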